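/- The order ∅[S_1,S_2,…,S_m] coincides with ∅[S_2,…,S_m] if and only if S_1 is logically equivalent to a disjunction of some (possibly empty, possibly all) Q-combinations of S_2,…,S_m. -/

import Mathlib

/-- Propositional formulas over variables of type `α`. -/
inductive PropForm (α : Type) : Type
  | var : α → PropForm α
  | tru : PropForm α
  | fls : PropForm α
  | neg : PropForm α → PropForm α
  | conj : PropForm α → PropForm α → PropForm α
  | disj : PropForm α → PropForm α → PropForm α

namespace PropForm
/-- Evaluation of a formula in a valuation (model). -/
def eval {α : Type} (v : α → Bool) : PropForm α → Bool
  | var a => v a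
  | tru => true
  | fls => false
  | neg f => !(eval v f)
  | conj f g => eval v f && eval v g
  | disj f g => eval v f || eval v g
end PropForm

/-- A model `I` satisfies formula `A`. -/
def Sat {α : Type} (I : α → Bool) (A : PropForm α) : Prop := PropForm.eval I A = true

/-- The order induced by a single formula: `I ≤_A J` iff `I ⊨ A` or `J ⊭ A`. -/
def leA {α : Type} (A : PropForm α) (I J : α → Bool) : Prop := Sat I A ∨ ¬ Sat J A

/-- Auxiliary: the order generated from the flat state by a revision sequence given
in reverse order (most recent revision first). -/
def leSeqRev {α : Type} (I J : α → Bool) : List (PropForm α) → Prop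
  | [] => True
  | A :: S' => leA A I J ∧ (¬ leA A J I ∨ leSeqRev I J S')

/-- `I ≤_{∅S} J`: the order generated from the flat state by the sequence `S` of
lexicographic revisions (given in chronological order, so the last element of `S`
is the most recent revision).  It satisfies `leSeq [] I J ↔ True` and
`leSeq (S' ++ [A]) I J ↔ leA A I J ∧ (¬ leA A J I ∨ leSeq S' I J)`. -/
def leSeq {α : Type} (S : List (PropForm α)) (I J : α → Bool) : Prop :=
  leSeqRev I J S.reverse

/-- `I ≡_{∅S} J`: equivalence of models in the order generated by `S`. -/
def equivSeq {α : Type} (S : List (PropForm α)) (I J : α → Bool) : Prop :=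
  leSeq S I J ∧ leSeq S J I

/-- The Q-combination of formulas `S` determined by the Boolean vector `B`:
the conjunction over `i` of `S i` if `B i = true` and of `¬ S i` if `B i = false`. -/
def qcomb {α : Type} : List Bool → List (PropForm α) → PropForm α
  | b :: bs, s :: ss => PropForm.conj (if b then s else PropForm.neg s) (qcomb bs ss)
  | _, _ => PropForm.tru

-- auxiliary lemmas

lemma leA_total {α : Type} (A : PropForm α) (I J : α → Bool) : leA A I J ∨ leA A J I := by
  unfold leA Sat; by_cases h : PropForm.eval I A = true <;> tauto

lemma leA_both_iff {α : Type} (A : PropForm α) (I J : α → Bool) :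
    (leA A I J ∧ leA A J I) ↔ PropForm.eval I A = PropForm.eval J A := by
  unfold leA Sat
  cases hI : PropForm.eval I A <;> cases hJ : PropForm.eval J A <;> simp

lemma leSeqRev_total {α : Type} (I J : α → Bool) :
    ∀ T : List (PropForm α), leSeqRev I J T ∨ leSeqRev J I T := by
  intro T
  induction T with
  | nil => left; trivial
  | cons A T ih =>
    rcases leA_total A I J with h | h
    · by_cases h2 : leA A J I
      · rcases ih with h3 | h3
        · left; exact ⟨h, Or.inr h3⟩
        · right; exact ⟨h2, Or.inr h3⟩
      · left; exact ⟨h, Or.inl h2⟩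
    · by_cases h2 : leA A I J
      · rcases ih with h3 | h3
        · left; exact ⟨h2, Or.inr h3⟩
        · right; exact ⟨h, Or.inr h3⟩
      · right; exact ⟨h, Or.inl h2⟩

lemma leSeqRev_append {α : Type} (I J : α → Bool) (A : PropForm α) :
    ∀ T : List (PropForm α),
      leSeqRev I J (T ++ [A]) ↔ leSeqRev I J T ∧ (¬ leSeqRev J I T ∨ leA A I J) := by
  intro T
  induction T with
  | nil => simp [leSeqRev]
  | cons B T ih =>
    simp only [List.cons_append, leSeqRev, ih]
    have := leA_total B I J
    tauto

lemma leSeq_cons {α : Type} (S1 : PropForm α) (S : List (PropForm α)) (I J : α → Bool) :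
    leSeq (S1 :: S) I J ↔ leSeq S I J ∧ (¬ leSeq S J I ∨ leA S1 I J) := by
  unfold leSeq
  rw [List.reverse_cons, leSeqRev_append]

lemma equiv_iff_vec {α : Type} (I J : α → Bool) :
    ∀ T : List (PropForm α),
      (leSeqRev I J T ∧ leSeqRev J I T) ↔ ∀ A ∈ T, PropForm.eval I A = PropForm.eval J A := by
  intro T
  induction T with
  | nil => simp [leSeqRev]
  | cons B T ih =>
    constructor
    · rintro ⟨⟨h1, h12⟩, h2, h22⟩
      have hB := (leA_both_iff B I J).mp ⟨h1, h2⟩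
      have hT1 : leSeqRev I J T := by rcases h12 with h | h; exact absurd h2 h; exact h
      have hT2 : leSeqRev J I T := by rcases h22 with h | h; exact absurd h1 h; exact h
      intro A hA
      rcases List.mem_cons.mp hA with rfl | hA
      · exact hB
      · exact (ih.mp ⟨hT1, hT2⟩) A hA
    · intro h
      have hB := (leA_both_iff B I J).mpr (h B List.mem_cons_self)
      have hT := ih.mpr (fun A hA => h A (List.mem_cons_of_mem _ hA))
      exact ⟨⟨hB.1, Or.inr hT.1⟩, hB.2, Or.inr hT.2⟩

lemma sat_qcomb {α : Type} (I : α → Bool) :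
    ∀ (S : List (PropForm α)) (B : List Bool), B.length = S.length →
      (Sat I (qcomb B S) ↔ S.map (PropForm.eval I) = B) := by
  intro S
  induction S with
  | nil => intro B hB; rw [List.length_nil, List.length_eq_zero_iff] at hB; subst hB
           simp [qcomb, Sat, PropForm.eval]
  | cons A S ih =>
    intro B hB
    cases B with
    | nil => simp at hB
    | cons b bs =>
      simp only [List.length_cons, Nat.succ.injEq] at hB
      have := ih bs hB
      cases b <;>
        simp_all [qcomb, Sat, PropForm.eval, List.map_cons, List.cons_eq_cons]

def allB : Nat → List (List Bool)
  | 0 => [[]]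
  | n + 1 => (allB n).flatMap (fun l => [true :: l, false :: l])

lemma mem_allB : ∀ (n : Nat) (B : List Bool), B ∈ allB n ↔ B.length = n := by
  intro n
  induction n with
  | zero => intro B; simp [allB, List.length_eq_zero_iff]
  | succ n ih =>
    intro B
    simp only [allB, List.mem_flatMap, List.mem_cons]
    constructor
    · rintro ⟨l, hl, h⟩
      have := (ih l).mp hl
      rcases h with h | h | h <;> simp_all
    · intro h
      cases B with
      | nil => simp at h
      | cons b bs =>
        refine ⟨bs, (ih bs).mpr (by simpa using h), ?_⟩
        cases b <;> simp

open Classical in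
/-- STATEMENT 11: `∅(S₁ :: S)` coincides with `∅S` iff `S₁` is equivalent to a
disjunction of some Q-combinations of `S`. -/
theorem redundant_iff_disjunction {α : Type} (S1 : PropForm α) (S : List (PropForm α)) :
    (∀ I J : α → Bool, leSeq (S1 :: S) I J ↔ leSeq S I J) ↔
      (∃ L : List (List Bool), (∀ B ∈ L, B.length = S.length) ∧
        (∀ I : α → Bool, Sat I S1 ↔ ∃ B ∈ L, Sat I (qcomb B S))) := by
  have keyfwd : (∀ I J : α → Bool, leSeq (S1 :: S) I J ↔ leSeq S I J) ↔
      (∀ I J : α → Bool, (∀ A ∈ S, PropForm.eval I A = PropForm.eval J A) →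
        (Sat I S1 ↔ Sat J S1)) := by
    constructor
    · intro h I J hvec
      have hIJ : leSeq S I J ∧ leSeq S J I := by
        unfold leSeq
        rw [equiv_iff_vec]
        intro A hA
        exact hvec A (List.mem_reverse.mp hA)
      have h1 : leA S1 I J := by
        have := (h I J).mpr hIJ.1
        rw [leSeq_cons] at this
        rcases this.2 with h' | h'
        · exact absurd hIJ.2 h'
        · exact h'
      have h2 : leA S1 J I := by
        have := (h J I).mpr hIJ.2
        rw [leSeq_cons] at this
        rcases this.2 with h' | h'
        · exact absurd hIJ.1 h'
        · exact h'
      have := (leA_both_iff S1 I J).mp ⟨h1, h2⟩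
      unfold Sat; rw [this]
    · intro h I J
      rw [leSeq_cons]
      constructor
      · exact fun h' => h'.1
      · intro h'
        refine ⟨h', ?_⟩
        by_cases hJI : leSeq S J I
        · right
          have hvec : ∀ A ∈ S, PropForm.eval I A = PropForm.eval J A := by
            have := (equiv_iff_vec I J S.reverse).mp ⟨h', hJI⟩
            intro A hA; exact this A (List.mem_reverse.mpr hA)
          have := h I J hvec
          unfold leA
          tauto
        · left; exact hJI
  rw [keyfwd]
  constructor
  · intro h
    refine ⟨(allB S.length).filter (fun B => decide (∃ I : α → Bool, Sat I (qcomb B S) ∧ Sat I S1)), ?_, ?_⟩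
    · intro B hB
      rw [List.mem_filter] at hB
      exact (mem_allB _ _).mp hB.1
    · intro I
      constructor
      · intro hI
        refine ⟨S.map (PropForm.eval I), ?_, ?_⟩
        · rw [List.mem_filter]
          constructor
          · exact (mem_allB _ _).mpr (List.length_map _)
          · simp only [decide_eq_true_eq]
            exact ⟨I, (sat_qcomb I S _ (List.length_map _)).mpr rfl, hI⟩
        · exact (sat_qcomb I S _ (List.length_map _)).mpr rfl
      · rintro ⟨B, hBL, hIB⟩
        rw [List.mem_filter] at hBL
        obtain ⟨hB1, hB2⟩ := hBL
        simp only [decide_eq_true_eq] at hB2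
        obtain ⟨J, hJB, hJ1⟩ := hB2
        have hlen := (mem_allB _ _).mp hB1
        have hI' := (sat_qcomb I S B hlen).mp hIB
        have hJ' := (sat_qcomb J S B hlen).mp hJB
        have hvec : ∀ A ∈ S, PropForm.eval I A = PropForm.eval J A := by
          have : S.map (PropForm.eval I) = S.map (PropForm.eval J) := by rw [hI', hJ']
          intro A hA
          exact List.map_eq_map_iff.mp this A hA
        exact (h I J hvec).mpr hJ1
  · rintro ⟨L, hlen, hL⟩ I J hvec
    have hmap : S.map (PropForm.eval I) = S.map (PropForm.eval J) :=
      List.map_eq_map_iff.mpr hvec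
    rw [hL I, hL J]
    constructor <;> rintro ⟨B, hB, hSB⟩ <;> refine ⟨B, hB, ?_⟩
    · rw [sat_qcomb J S B (hlen B hB), ← hmap, ← sat_qcomb I S B (hlen B hB)]; exact hSB
    · rw [sat_qcomb I S B (hlen B hB), hmap, ← sat_qcomb J S B (hlen B hB)]; exact hSB
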